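/- The group G_oo with presentation ⟨x, y | x y x y x⁻¹ y⁻¹ x y⁻¹ x⁻¹ y⁻¹⟩ and the group G_oe with presentation ⟨x, y | x y x y⁻¹ x⁻¹ y⁻¹ x y x⁻¹ y⁻¹⟩ are not isomorphic as groups. -/

import Mathlib

open FreeGroup

/-- The generator `x` of the free group on two generators. -/
def x : FreeGroup (Fin 2) := FreeGroup.of 0

/-- The generator `y` of the free group on two generators. -/
def y : FreeGroup (Fin 2) := FreeGroup.of 1

/-- The relator `r_oo`. -/
def r_oo : FreeGroup (Fin 2) := x * y * x * y * x⁻¹ * y⁻¹ * x * y⁻¹ * x⁻¹ * y⁻¹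

/-- The relator `r_oe`. -/
def r_oe : FreeGroup (Fin 2) := x * y * x * y⁻¹ * x⁻¹ * y⁻¹ * x * y * x⁻¹ * y⁻¹

/-- The group `G_oo` presented with the single relator `r_oo`. -/
def G_oo : Type := PresentedGroup ({r_oo} : Set (FreeGroup (Fin 2)))

/-- The group `G_oe` presented with the single relator `r_oe`. -/
def G_oe : Type := PresentedGroup ({r_oe} : Set (FreeGroup (Fin 2)))

noncomputable instance : Group G_oo := by unfold G_oo; infer_instance

noncomputable instance : Group G_oe := by unfold G_oe; infer_instance

/-! ### A finite group of order 21 (`ℤ/7 ⋊ ℤ/3`) distinguishing the two groups -/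

/-- The underlying type of the Frobenius group of order 21. -/
def H21 : Type := Fin 7 × Fin 3

instance : DecidableEq H21 := by unfold H21; infer_instance
instance : Fintype H21 := by unfold H21; infer_instance

instance : Mul H21 := ⟨fun a b => (a.1 + 2 ^ a.2.val * b.1, a.2 + b.2)⟩
instance : One H21 := ⟨((0 : Fin 7), (0 : Fin 3))⟩
instance : Inv H21 := ⟨fun a => (-(2 ^ (-a.2).val * a.1), -a.2)⟩

set_option maxHeartbeats 2000000 in
instance : Group H21 :=
  Group.ofLeftAxioms (by decide) (by decide) (by decide)

/-- Evaluation of the word `r_oo` at a pair of group elements. -/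
def woo {G : Type*} [Group G] (a b : G) : G :=
  a * b * a * b * a⁻¹ * b⁻¹ * a * b⁻¹ * a⁻¹ * b⁻¹

/-- Evaluation of the word `r_oe` at a pair of group elements. -/
def woe {G : Type*} [Group G] (a b : G) : G :=
  a * b * a * b⁻¹ * a⁻¹ * b⁻¹ * a * b * a⁻¹ * b⁻¹

lemma lift_roo {G : Type*} [Group G] (f : Fin 2 → G) :
    FreeGroup.lift f r_oo = woo (f 0) (f 1) := by
  simp [r_oo, x, y, woo]

lemma lift_roe {G : Type*} [Group G] (f : Fin 2 → G) :
    FreeGroup.lift f r_oe = woe (f 0) (f 1) := by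
  simp [r_oe, x, y, woe]

/-- Homomorphisms from a presented group on two generators correspond to
pairs satisfying the relations. -/
def homEquiv {G : Type*} [Group G] (rels : Set (FreeGroup (Fin 2))) :
    (PresentedGroup rels →* G) ≃ {f : Fin 2 → G // ∀ r ∈ rels, FreeGroup.lift f r = 1} where
  toFun φ := ⟨fun i => φ (PresentedGroup.of i), fun r hr => by
    have h1 : φ (PresentedGroup.mk rels r)
        = FreeGroup.lift (fun i => φ (PresentedGroup.of i)) r :=
      FreeGroup.lift_unique (φ.comp (PresentedGroup.mk rels)) (fun _ => rfl)
    have h2 : PresentedGroup.mk rels r = 1 :=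
      (QuotientGroup.eq_one_iff _).mpr (Subgroup.subset_normalClosure hr)
    rw [← h1, h2]; exact map_one φ⟩
  invFun p := PresentedGroup.toGroup p.2
  left_inv φ := by
    ext i
    exact PresentedGroup.toGroup.of _
  right_inv p := by
    apply Subtype.ext
    funext i
    exact PresentedGroup.toGroup.of _

/-- Precomposition with a group isomorphism gives an equivalence on hom sets. -/
def homCompEquiv {A B : Type*} [Group A] [Group B] (e : A ≃* B) (G : Type*) [Group G] :
    (A →* G) ≃ (B →* G) where
  toFun f := f.comp e.symm.toMonoidHom
  invFun g := g.comp e.toMonoidHom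
  left_inv f := by ext a; simp
  right_inv g := by ext b; simp

/-- The set of solutions of a single relator. -/
def Sol (r : FreeGroup (Fin 2)) (G : Type*) [Group G] [DecidableEq G] : Type _ :=
  {f : Fin 2 → G // FreeGroup.lift f r = 1}

instance (r : FreeGroup (Fin 2)) (G : Type*) [Group G] [DecidableEq G] [Fintype G] :
    Fintype (Sol r G) := by
  unfold Sol; infer_instance

def solEquivSingle {G : Type*} [Group G] [DecidableEq G] (r : FreeGroup (Fin 2)) :
    (PresentedGroup ({r} : Set (FreeGroup (Fin 2))) →* G) ≃ Sol r G :=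
  (homEquiv {r}).trans (Equiv.subtypeEquivRight (fun f => by simp [Sol]))

lemma card_oo : Fintype.card (Sol r_oo H21) = 63 := by
  have e : Sol r_oo H21 ≃ {p : H21 × H21 // woo p.1 p.2 = 1} :=
    (Equiv.subtypeEquivRight (fun f => by rw [lift_roo])).trans
      ((piFinTwoEquiv (fun _ => H21)).subtypeEquiv (fun f => by simp))
  rw [Fintype.card_congr e]
  decide

lemma card_oe : Fintype.card (Sol r_oe H21) = 21 := by
  have e : Sol r_oe H21 ≃ {p : H21 × H21 // woe p.1 p.2 = 1} :=
    (Equiv.subtypeEquivRight (fun f => by rw [lift_roe])).trans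
      ((piFinTwoEquiv (fun _ => H21)).subtypeEquiv (fun f => by simp))
  rw [Fintype.card_congr e]
  decide

theorem G_oo_not_iso_G_oe : ¬ Nonempty (G_oo ≃* G_oe) := by
  rintro ⟨e⟩
  have e' : PresentedGroup ({r_oo} : Set (FreeGroup (Fin 2)))
      ≃* PresentedGroup ({r_oe} : Set (FreeGroup (Fin 2))) := e
  have big : Sol r_oo H21 ≃ Sol r_oe H21 :=
    ((solEquivSingle r_oo).symm.trans (homCompEquiv e' H21)).trans
      (solEquivSingle r_oe)
  have h := Fintype.card_congr big
  rw [card_oo, card_oe] at h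
  omega
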